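/- There is no minimal separable linear order of cardinality continuum: for every separable linear order L of cardinality 2^ℵ₀ there is a suborder S ⊆ L of cardinality 2^ℵ₀ such that L does not order-embed into S (with the induced order). -/

import Mathlib

open Cardinal Set

namespace NMS

variable {L : Type*} [LinearOrder L]

/-- The set of possible values of `f x` for a strict mono `f` whose restriction to `D` is `g`. -/
def Icut (D : Set L) (g : D → L) (x : L) : Set L :=
  {m | (∀ d : D, (d : L) < x → g d < m) ∧ ∀ d : D, x < (d : L) → m < g d}

theorem icut_mem_of_between {D : Set L} {g : D → L} {x a b m : L}
    (ha : a ∈ Icut D g x) (hb : b ∈ Icut D g x) (h1 : a ≤ m) (h2 : m ≤ b) :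
    m ∈ Icut D g x :=
  ⟨fun d hd => lt_of_lt_of_le (ha.1 d hd) h1, fun d hd => lt_of_le_of_lt h2 (hb.2 d hd)⟩


/-- no point lies in the cut-intervals of three chained points -/
theorem icut_no_three {D : Set L}
    (hD : ∀ x y : L, x < y → (∃ z : L, x < z ∧ z < y) → ∃ d ∈ D, x < d ∧ d < y)
    {g : D → L} {x y z m : L} (hxy : x < y) (hyz : y < z)
    (hmx : m ∈ Icut D g x) (hmz : m ∈ Icut D g z) : False := by
  obtain ⟨d, hd, hxd, hdz⟩ := hD x z (hxy.trans hyz) ⟨y, hxy, hyz⟩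
  exact absurd (hmx.2 ⟨d, hd⟩ hxd) (not_lt.2 (hmz.1 ⟨d, hd⟩ hdz).le)

theorem subset_pair_of_no_three [Nonempty L] {P : Set L}
    (h : ∀ x ∈ P, ∀ y ∈ P, ∀ z ∈ P, x < y → y < z → False) :
    ∃ a b : L, P ⊆ {a, b} := by
  by_cases h1 : ∃ a, a ∈ P
  · obtain ⟨a, ha⟩ := h1
    by_cases h2 : ∃ b ∈ P, b ≠ a
    · obtain ⟨b, hb, hba⟩ := h2
      refine ⟨a, b, fun c hc => ?_⟩
      by_contra hcc
      simp only [mem_insert_iff, mem_singleton_iff, not_or] at hcc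
      obtain ⟨hca, hcb⟩ := hcc
      rcases lt_trichotomy a b with hab | hab | hab
      · rcases lt_trichotomy c a with h' | h' | h'
        · exact h c hc a ha b hb h' hab
        · exact hca h'
        · rcases lt_trichotomy c b with h'' | h'' | h''
          · exact h a ha c hc b hb h' h''
          · exact hcb h''
          · exact h a ha b hb c hc hab h''
      · exact hba hab.symm
      · rcases lt_trichotomy c b with h' | h' | h'
        · exact h c hc b hb a ha h' hab
        · exact hcb h'
        · rcases lt_trichotomy c a with h'' | h'' | h''
          · exact h b hb c hc a ha h' h''
          · exact hca h''
          · exact h b hb a ha c hc hab h''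
    · push_neg at h2
      exact ⟨a, a, fun c hc => Or.inl (h2 c hc)⟩
  · push_neg at h1
    exact ⟨Classical.arbitrary L, Classical.arbitrary L, fun c hc => absurd hc (h1 c)⟩

omit [LinearOrder L] in
theorem mk_le_two_of_subset_pair {P : Set L} {a b : L} (h : P ⊆ {a, b}) :
    Cardinal.mk P ≤ 2 := by
  calc Cardinal.mk P ≤ Cardinal.mk ({a, b} : Set L) := mk_le_mk_of_subset h
    _ ≤ Cardinal.mk ({b} : Set L) + 1 := Cardinal.mk_insert_le
    _ = 2 := by rw [Cardinal.mk_singleton]; norm_num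

end NMS

namespace NMS2
open NMS

variable {L : Type*} [LinearOrder L]

theorem exists_chain_of_not_subset_pair [Nonempty L] {P : Set L}
    (h : ¬ ∃ a b : L, P ⊆ {a, b}) :
    ∃ u ∈ P, ∃ v ∈ P, ∃ t ∈ P, u < v ∧ v < t := by
  by_contra hc
  push_neg at hc
  exact h (subset_pair_of_no_three fun x hx y hy z hz hxy hyz =>
    absurd hyz (not_lt.2 (hc x hx y hy z hz hxy)))

theorem exists_good_x [Nonempty L] {D : Set L}
    (hD : ∀ x y : L, x < y → (∃ z : L, x < z ∧ z < y) → ∃ d ∈ D, x < d ∧ d < y)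
    (hDc : Cardinal.mk D ≤ Cardinal.aleph0)
    (hL : Cardinal.aleph0 < Cardinal.mk L)
    (g : D → L) (K : Set L) (hK : Cardinal.mk K < Cardinal.mk L) :
    ∃ x : L, (∃ a b : L, Icut D g x ⊆ {a, b}) ∧ ∀ y ∈ K, y ∉ Icut D g x := by
  classical
  set Fib : L → Set L := fun m => {x | m ∈ Icut D g x} with hFib
  have hfibpair : ∀ m : L, ∃ a b : L, Fib m ⊆ {a, b} := fun m =>
    subset_pair_of_no_three fun x hx y _hy z hz hxy hyz =>
      icut_no_three hD hxy hyz hx hz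
  have hfib : ∀ m : L, Cardinal.mk (Fib m) ≤ 2 := fun m => by
    obtain ⟨a, b, hab⟩ := hfibpair m
    exact mk_le_two_of_subset_pair hab
  set Bad : Set L := {x | ¬ ∃ a b : L, Icut D g x ⊆ {a, b}} with hBad
  set Meet : Set L := {x | ∃ y ∈ K, y ∈ Icut D g x} with hMeet
  have hBadsub : Bad ⊆ ⋃ d : D, Fib (d : L) := by
    intro x hx
    obtain ⟨u, hu, v, hv, t, ht, huv, hvt⟩ := exists_chain_of_not_subset_pair hx
    obtain ⟨d, hd, hud, hdt⟩ := hD u t (huv.trans hvt) ⟨v, huv, hvt⟩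
    have hdI : d ∈ Icut D g x := icut_mem_of_between hu ht hud.le hdt.le
    exact Set.mem_iUnion.2 ⟨⟨d, hd⟩, hdI⟩
  have hMeetsub : Meet ⊆ ⋃ y : K, Fib (y : L) := by
    intro x hx
    obtain ⟨y, hy, hyI⟩ := hx
    exact Set.mem_iUnion.2 ⟨⟨y, hy⟩, hyI⟩
  have htwo : (2 : Cardinal) < Cardinal.mk L := (Cardinal.nat_lt_aleph0 2).trans hL
  have hBadcard : Cardinal.mk Bad < Cardinal.mk L := by
    calc Cardinal.mk Bad ≤ Cardinal.mk (⋃ d : D, Fib (d : L)) := mk_le_mk_of_subset hBadsub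
      _ ≤ Cardinal.sum fun d : D => Cardinal.mk (Fib (d : L)) := Cardinal.mk_iUnion_le_sum_mk
      _ ≤ Cardinal.sum fun _ : D => (2 : Cardinal) := Cardinal.sum_le_sum _ _ fun d => hfib _
      _ = Cardinal.mk D * 2 := Cardinal.sum_const' _ 2
      _ < Cardinal.mk L := Cardinal.mul_lt_of_lt hL.le (hDc.trans_lt hL) htwo
  have hMeetcard : Cardinal.mk Meet < Cardinal.mk L := by
    calc Cardinal.mk Meet ≤ Cardinal.mk (⋃ y : K, Fib (y : L)) := mk_le_mk_of_subset hMeetsub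
      _ ≤ Cardinal.sum fun y : K => Cardinal.mk (Fib (y : L)) := Cardinal.mk_iUnion_le_sum_mk
      _ ≤ Cardinal.sum fun _ : K => (2 : Cardinal) := Cardinal.sum_le_sum _ _ fun y => hfib _
      _ = Cardinal.mk K * 2 := Cardinal.sum_const' _ 2
      _ < Cardinal.mk L := Cardinal.mul_lt_of_lt hL.le hK htwo
  have hunion : Cardinal.mk (Bad ∪ Meet : Set L) < Cardinal.mk L :=
    lt_of_le_of_lt (Cardinal.mk_union_le _ _)
      (Cardinal.add_lt_of_lt hL.le hBadcard hMeetcard)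
  have : ∃ x : L, x ∉ Bad ∪ Meet := by
    by_contra hall
    push_neg at hall
    have : (Set.univ : Set L) ⊆ Bad ∪ Meet := fun x _ => hall x
    have := (mk_le_mk_of_subset this).trans_lt hunion
    rw [Cardinal.mk_univ] at this
    exact lt_irrefl _ this
  obtain ⟨x, hx⟩ := this
  rw [Set.mem_union] at hx
  push_neg at hx
  refine ⟨x, not_not.1 hx.1, fun y hy hyI => hx.2 ⟨y, hy, hyI⟩⟩

end NMS2

namespace NMS3
open NMS NMS2

variable {L : Type*} [LinearOrder L]

theorem exists_not_mem_of_mk_lt {A : Set L} (h : Cardinal.mk A < Cardinal.mk L) :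
    ∃ x : L, x ∉ A := by
  by_contra hall
  push_neg at hall
  have hsub : (Set.univ : Set L) ⊆ A := fun x _ => hall x
  have := (mk_le_mk_of_subset hsub).trans_lt h
  rw [Cardinal.mk_univ] at this
  exact lt_irrefl _ this

theorem main_construction (D : Set L)
    (hD : ∀ x y : L, x < y → (∃ z : L, x < z ∧ z < y) → ∃ d ∈ D, x < d ∧ d < y)
    (hDc : Cardinal.mk D ≤ Cardinal.aleph0)
    (hcard : Cardinal.mk L = 2 ^ Cardinal.aleph0) :
    ∃ S : Set L, Cardinal.mk S = Cardinal.mk L ∧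
      ∀ f : L → L, StrictMono f → ∃ x : L, f x ∉ S := by
  classical
  haveI : Nonempty L := by
    rw [← Cardinal.mk_ne_zero_iff, hcard]
    exact Cardinal.power_ne_zero _ two_ne_zero
  have hℵ : Cardinal.aleph0 < Cardinal.mk L := by
    rw [hcard]; exact Cardinal.cantor _
  have htwo : (2 : Cardinal) < Cardinal.mk L := (Cardinal.nat_lt_aleph0 2).trans hℵ
  -- the index well-order
  have hWcard : Cardinal.mk ((Cardinal.mk L).ord).ToType = Cardinal.mk L := by
    rw [Cardinal.mk_toType, Cardinal.card_ord]
  have hseg : ∀ w : ((Cardinal.mk L).ord).ToType, Cardinal.mk {v : ((Cardinal.mk L).ord).ToType // v < w} < Cardinal.mk L := by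
    intro w
    have iwo : IsWellOrder ((Cardinal.mk L).ord).ToType (fun a b => a < b) := isWellOrder_lt
    have h1 := @Ordinal.typein_lt_type _ _ iwo w
    rw [Ordinal.type_toType] at h1
    have h2 := Cardinal.lt_ord.1 h1
    exact h2
  -- surjection onto codes
  haveI : Nonempty (D → L) := ⟨fun _ => Classical.arbitrary L⟩
  have hCle : Cardinal.mk (D → L) ≤ Cardinal.mk ((Cardinal.mk L).ord).ToType := by
    rw [hWcard]
    calc Cardinal.mk (D → L) = Cardinal.mk L ^ Cardinal.mk D := (Cardinal.power_def L D).symm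
      _ ≤ Cardinal.mk L ^ Cardinal.aleph0 := by
          exact Cardinal.power_le_power_left (by positivity) hDc
      _ = Cardinal.mk L := by
          rw [hcard, ← Cardinal.power_mul, Cardinal.aleph0_mul_aleph0]
  obtain ⟨i⟩ := Cardinal.le_def _ _ |>.1 hCle
  set s : ((Cardinal.mk L).ord).ToType → (D → L) := Function.invFun i with hs_def
  have hs : Function.Surjective s := Function.invFun_surjective i.injective
  -- the recursion
  set P : ∀ w : ((Cardinal.mk L).ord).ToType, (∀ v, v < w → L × L) → L × L → Prop :=
    fun w prev p =>
      (∃ a b : L, Icut D (s w) p.1 ⊆ {a, b}) ∧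
      (∀ v (h : v < w), (prev v h).2 ∉ Icut D (s w) p.1) ∧
      (∀ v (h : v < w), p.2 ≠ (prev v h).2) ∧
      (∀ v (h : v < w), p.2 ∉ Icut D (s v) (prev v h).1) ∧
      p.2 ∉ Icut D (s w) p.1 with hP
  have wf : WellFounded ((· < ·) : ((Cardinal.mk L).ord).ToType → ((Cardinal.mk L).ord).ToType → Prop) := IsWellFounded.wf
  set g : ((Cardinal.mk L).ord).ToType → L × L := wf.fix (fun w prev => Classical.epsilon (P w prev)) with hg_def
  have hg : ∀ w, g w = Classical.epsilon (P w (fun v _ => g v)) := fun w =>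
    WellFounded.fix_eq wf _ w
  have key : ∀ w : ((Cardinal.mk L).ord).ToType, P w (fun v _ => g v) (g w) := by
    intro w
    induction w using WellFounded.induction wf with
    | _ w IH =>
      rw [hg w]
      apply Classical.epsilon_spec (p := P w (fun v _ => g v))
      -- existence of a good pair at stage w
      set Kp : Set L := Set.range (fun v : {v : ((Cardinal.mk L).ord).ToType // v < w} => (g v.1).2) with hKp_def
      have hKp : Cardinal.mk Kp < Cardinal.mk L :=
        Cardinal.mk_range_le.trans_lt (hseg w)
      obtain ⟨x, hxsmall, hxK⟩ := exists_good_x hD hDc hℵ (s w) Kp hKp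
      have hIcard : ∀ v : {v : ((Cardinal.mk L).ord).ToType // v < w},
          Cardinal.mk (Icut D (s v.1) (g v.1).1) ≤ 2 := by
        intro v
        obtain ⟨a, b, hab⟩ := (IH v.1 v.2).1
        exact mk_le_two_of_subset_pair hab
      have hMid : Cardinal.mk (⋃ v : {v : ((Cardinal.mk L).ord).ToType // v < w}, Icut D (s v.1) (g v.1).1)
          < Cardinal.mk L := by
        calc Cardinal.mk (⋃ v : {v : ((Cardinal.mk L).ord).ToType // v < w}, Icut D (s v.1) (g v.1).1)
            ≤ Cardinal.sum fun v : {v : ((Cardinal.mk L).ord).ToType // v < w} =>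
              Cardinal.mk (Icut D (s v.1) (g v.1).1) := Cardinal.mk_iUnion_le_sum_mk
          _ ≤ Cardinal.sum fun _ : {v : ((Cardinal.mk L).ord).ToType // v < w} => (2 : Cardinal) :=
              Cardinal.sum_le_sum _ _ hIcard
          _ = Cardinal.mk {v : ((Cardinal.mk L).ord).ToType // v < w} * 2 := Cardinal.sum_const' _ 2
          _ < Cardinal.mk L := Cardinal.mul_lt_of_lt hℵ.le (hseg w) htwo
      have hxcard : Cardinal.mk (Icut D (s w) x) ≤ 2 := by
        obtain ⟨a, b, hab⟩ := hxsmall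
        exact mk_le_two_of_subset_pair hab
      set A : Set L := (Kp ∪ ⋃ v : {v : ((Cardinal.mk L).ord).ToType // v < w}, Icut D (s v.1) (g v.1).1)
        ∪ Icut D (s w) x with hA_def
      have hA : Cardinal.mk A < Cardinal.mk L := by
        refine (Cardinal.mk_union_le _ _).trans_lt (Cardinal.add_lt_of_lt hℵ.le ?_ ?_)
        · exact (Cardinal.mk_union_le _ _).trans_lt
            (Cardinal.add_lt_of_lt hℵ.le hKp hMid)
        · exact hxcard.trans_lt htwo
      obtain ⟨kp, hkp⟩ := exists_not_mem_of_mk_lt hA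
      refine ⟨(x, kp), hxsmall, ?_, ?_, ?_, ?_⟩
      · intro v h
        exact hxK _ ⟨⟨v, h⟩, rfl⟩
      · intro v h heq
        exact hkp (Or.inl (Or.inl ⟨⟨v, h⟩, heq.symm⟩))
      · intro v h hmem
        exact hkp (Or.inl (Or.inr (Set.mem_iUnion.2 ⟨⟨v, h⟩, hmem⟩)))
      · intro hmem
        exact hkp (Or.inr hmem)
  -- the suborder
  have kinj : Function.Injective fun w : ((Cardinal.mk L).ord).ToType => (g w).2 := by
    intro a b hab
    by_contra hne
    rcases lt_trichotomy a b with h | h | h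
    · exact (key b).2.2.1 a h hab.symm
    · exact hne h
    · exact (key a).2.2.1 b h hab
  refine ⟨Set.range fun w : ((Cardinal.mk L).ord).ToType => (g w).2, ?_, ?_⟩
  · rw [Cardinal.mk_range_eq _ kinj, hWcard]
  · intro f hf
    obtain ⟨w, hw⟩ := hs fun d : D => f d
    refine ⟨(g w).1, ?_⟩
    have hfx : f (g w).1 ∈ Icut D (s w) (g w).1 := by
      rw [hw]
      exact ⟨fun d hd => hf hd, fun d hd => hf hd⟩
    rintro ⟨v, hv⟩
    simp only at hv
    have hvmem : (g v).2 ∈ Icut D (s w) (g w).1 := by rw [hv]; exact hfx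
    rcases lt_trichotomy v w with h | h | h
    · exact (key w).2.1 v h hvmem
    · subst h; exact (key v).2.2.2.2 hvmem
    · exact (key v).2.2.2.1 w h hvmem

end NMS3


/-- A linear order is separable if it has a countable subset `D` such that between
any two points which have some point strictly between them, there is a point of `D`. -/
def SeparableOrder (α : Type*) [LinearOrder α] : Prop :=
  ∃ D : Set α, D.Countable ∧
    ∀ x y : α, x < y → (∃ z : α, x < z ∧ z < y) → ∃ d ∈ D, x < d ∧ d < y

/-- There is no minimal separable linear order of cardinality continuum: every separable
linear order of cardinality `2^ℵ₀` has a suborder of cardinality `2^ℵ₀` into which it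
does not order-embed. -/
theorem no_minimal_separable_continuum (L : Type*) [LinearOrder L]
    (hsep : SeparableOrder L) (hcard : Cardinal.mk L = 2 ^ Cardinal.aleph0) :
    ∃ S : Set L, Cardinal.mk S = 2 ^ Cardinal.aleph0 ∧ IsEmpty (L ↪o S) := by
  obtain ⟨D, hDc, hD⟩ := hsep
  have hDc' : Cardinal.mk D ≤ Cardinal.aleph0 := by
    haveI := hDc.to_subtype
    exact Cardinal.mk_le_aleph0
  obtain ⟨S, hS1, hS2⟩ := NMS3.main_construction D hD hDc' hcard
  refine ⟨S, by rw [hS1, hcard], ⟨fun e => ?_⟩⟩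
  have hf : StrictMono (fun x : L => ((e x : S) : L)) := fun a b h =>
    Subtype.coe_lt_coe.2 (e.strictMono h)
  obtain ⟨x, hx⟩ := hS2 _ hf
  exact hx (e x).2
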